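/- arXiv:2405.07224 — 3 statements merged into one kernel-verified Lean document; each statement's English description precedes it below -/
import Mathlib

section
/- The Shahshahani divergence of the effective replicator field of a finite game equals (1/2) ∑_{i ∈ N} ∑_{α_i ∈ A_i} (u_i(α_i; x_{-i}) − u_i(x)) for every interior mixed profile x. -/
open Finset

noncomputable section

/-- Full coordinates on the simplex from effective (corner-of-cube) coordinates:
`x_{i,0} = 1 − ∑_k x̃_{i,k}` and `x_{i,k.succ} = x̃_{i,k}`. -/
def fullCoord {ι : Type*} [Fintype ι] (m : ι → ℕ)
    (y : ∀ i, Fin (m i) → ℝ) : ∀ i, Fin (m i + 1) → ℝ :=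
  fun i => Fin.cons (1 - ∑ k, y i k) (y i)

/-- The multilinear mixed extension of player `i`'s payoff function. -/
def mixedPayoff {ι : Type*} [Fintype ι] [DecidableEq ι] (m : ι → ℕ)
    (u : ι → (∀ j, Fin (m j + 1)) → ℝ) (i : ι) (x : ∀ j, Fin (m j + 1) → ℝ) : ℝ :=
  ∑ α : ∀ j, Fin (m j + 1), u i α * ∏ j, x j (α j)

/-- The mixed payoff `u_i(a ; x_{-i})`. -/
def unilateralPayoff {ι : Type*} [Fintype ι] [DecidableEq ι] (m : ι → ℕ)
    (u : ι → (∀ j, Fin (m j + 1)) → ℝ) (i : ι) (a : Fin (m i + 1))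
    (x : ∀ j, Fin (m j + 1) → ℝ) : ℝ :=
  mixedPayoff m u i (Function.update x i (fun b => if b = a then 1 else 0))

/-- The effective payoff field `ṽ_{i,k}(x̃) = u_i(k;x_{-i}) − u_i(0_i;x_{-i})`. -/
def effField {ι : Type*} [Fintype ι] [DecidableEq ι] (m : ι → ℕ)
    (u : ι → (∀ j, Fin (m j + 1)) → ℝ) (i : ι) (k : Fin (m i))
    (y : ∀ j, Fin (m j) → ℝ) : ℝ :=
  unilateralPayoff m u i k.succ (fullCoord m y) -
    unilateralPayoff m u i 0 (fullCoord m y)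

/-- The effective replicator field
`X̃_{i,k}(x̃) = x̃_{i,k} (ṽ_{i,k}(x̃) − ∑_l x̃_{i,l} ṽ_{i,l}(x̃))`. -/
def effReplicator {ι : Type*} [Fintype ι] [DecidableEq ι] (m : ι → ℕ)
    (u : ι → (∀ j, Fin (m j + 1)) → ℝ) (i : ι) (k : Fin (m i))
    (y : ∀ j, Fin (m j) → ℝ) : ℝ :=
  y i k * (effField m u i k y - ∑ l, y i l * effField m u i l y)

/-- `√(det g̃_i)`, the square root of the determinant of the effective Shahshahani
metric of player `i`: `det g̃_i = 1 / (x_{i,0} ∏_k x̃_{i,k})`. -/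
def sqrtDet {ι : Type*} [Fintype ι] (m : ι → ℕ) (i : ι)
    (y : ∀ j, Fin (m j) → ℝ) : ℝ :=
  Real.sqrt (1 / ((1 - ∑ k, y i k) * ∏ k, y i k))

/-- The coordinate direction `(i, k)` in the effective strategy space. -/
def coordDir {ι : Type*} [Fintype ι] [DecidableEq ι] (m : ι → ℕ) (i : ι)
    (k : Fin (m i)) : ∀ j, Fin (m j) → ℝ :=
  Function.update (0 : ∀ j, Fin (m j) → ℝ) i (Pi.single k 1)

/-- The Shahshahani (Riemannian) divergence of the effective replicator field:
`div X̃ = ∑_i (det g̃_i)^{-1/2} ∑_k ∂_{x̃_{i,k}} ((det g̃_i)^{1/2} X̃_{i,k})`. -/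
def shahDiv {ι : Type*} [Fintype ι] [DecidableEq ι] (m : ι → ℕ)
    (u : ι → (∀ j, Fin (m j + 1)) → ℝ) (y : ∀ j, Fin (m j) → ℝ) : ℝ :=
  ∑ i, (sqrtDet m i y)⁻¹ *
    ∑ k, fderiv ℝ (fun z => sqrtDet m i z * effReplicator m u i k z) y (coordDir m i k)

set_option linter.unusedSectionVars false
set_option maxHeartbeats 1000000

section Aux


variable {ι : Type*} [Fintype ι] [DecidableEq ι] {m : ι → ℕ}

/-- Directional-derivative predicate: `f` has some derivative `F` at `y` with `F d = r`. -/
def DD (y d : ∀ j, Fin (m j) → ℝ) (f : (∀ j, Fin (m j) → ℝ) → ℝ) (r : ℝ) : Prop :=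
  ∃ F : (∀ j, Fin (m j) → ℝ) →L[ℝ] ℝ, HasFDerivAt f F y ∧ F d = r

namespace DD

variable {y d : ∀ j, Fin (m j) → ℝ} {f g : (∀ j, Fin (m j) → ℝ) → ℝ} {r s : ℝ}

theorem congr_r (h : DD y d f r) (hrs : r = s) : DD y d f s := hrs ▸ h

theorem const (c : ℝ) : DD y d (fun _ => c) 0 :=
  ⟨0, hasFDerivAt_const c y, rfl⟩

theorem coord (j : ι) (c : Fin (m j)) : DD y d (fun z => z j c) (d j c) := by
  let M := (ContinuousLinearMap.proj (R := ℝ) (φ := fun _ : Fin (m j) => ℝ) c).comp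
      (ContinuousLinearMap.proj (R := ℝ) (φ := fun j => Fin (m j) → ℝ) j)
  exact ⟨M, M.hasFDerivAt, rfl⟩

theorem add (hf : DD y d f r) (hg : DD y d g s) : DD y d (fun z => f z + g z) (r + s) := by
  obtain ⟨F, hF, hFr⟩ := hf; obtain ⟨G, hG, hGr⟩ := hg
  exact ⟨F + G, hF.add hG, by simp [hFr, hGr]⟩

theorem sub (hf : DD y d f r) (hg : DD y d g s) : DD y d (fun z => f z - g z) (r - s) := by
  obtain ⟨F, hF, hFr⟩ := hf; obtain ⟨G, hG, hGr⟩ := hg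
  exact ⟨F - G, hF.sub hG, by simp [hFr, hGr]⟩

theorem mul (hf : DD y d f r) (hg : DD y d g s) :
    DD y d (fun z => f z * g z) (f y * s + g y * r) := by
  obtain ⟨F, hF, hFr⟩ := hf; obtain ⟨G, hG, hGr⟩ := hg
  exact ⟨f y • G + g y • F, hF.mul hG, by simp [hFr, hGr]⟩

theorem sum {κ : Type*} (t : Finset κ) (f : κ → (∀ j, Fin (m j) → ℝ) → ℝ) (r : κ → ℝ)
    (h : ∀ a ∈ t, DD y d (f a) (r a)) :
    DD y d (fun z => ∑ a ∈ t, f a z) (∑ a ∈ t, r a) := by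
  classical
  induction t using Finset.induction_on with
  | empty => simpa using DD.const (m := m) (y := y) (d := d) 0
  | @insert a t ha ih =>
    simp only [Finset.sum_insert ha]
    exact (h a (Finset.mem_insert_self a t)).add
      (ih fun b hb => h b (Finset.mem_insert_of_mem hb))

theorem inv (hf : DD y d f r) (h0 : f y ≠ 0) :
    DD y d (fun z => (f z)⁻¹) (-(f y ^ 2)⁻¹ * r) := by
  obtain ⟨F, hF, hFr⟩ := hf
  exact ⟨-(f y ^ 2)⁻¹ • F, (hasDerivAt_inv h0).comp_hasFDerivAt y hF, by simp [hFr]⟩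

theorem sqrt (hf : DD y d f r) (h0 : f y ≠ 0) :
    DD y d (fun z => Real.sqrt (f z)) (1 / (2 * Real.sqrt (f y)) * r) := by
  obtain ⟨F, hF, hFr⟩ := hf
  exact ⟨(1 / (2 * Real.sqrt (f y))) • F,
    (Real.hasDerivAt_sqrt h0).comp_hasFDerivAt y hF, by simp [hFr]⟩


theorem one_div (hf : DD y d f r) (h0 : f y ≠ 0) :
    DD y d (fun z => 1 / f z) (-(f y ^ 2)⁻¹ * r) := by
  have he : (fun z => 1 / f z) = fun z => (f z)⁻¹ := by
    funext z; rw [_root_.one_div]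
  rw [he]
  exact hf.inv h0

theorem prod {κ : Type*} [DecidableEq κ] (t : Finset κ)
    (f : κ → (∀ j, Fin (m j) → ℝ) → ℝ) (r : κ → ℝ) (h : ∀ a, DD y d (f a) (r a)) :
    DD y d (fun z => ∏ a ∈ t, f a z) (∑ a ∈ t, (∏ b ∈ t.erase a, f b y) * r a) := by
  choose F hF hFr using h
  refine ⟨∑ a ∈ t, (∏ b ∈ t.erase a, f b y) • F a, ?_, ?_⟩
  · exact HasFDerivAt.finset_prod fun a _ => hF a
  · simp [hFr]

end DD

theorem DD.fderiv_eq {y d : ∀ j, Fin (m j) → ℝ} {f : (∀ j, Fin (m j) → ℝ) → ℝ} {r : ℝ}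
    (h : DD y d f r) : fderiv ℝ f y d = r := by
  obtain ⟨F, hF, hFr⟩ := h; rw [hF.fderiv]; exact hFr


theorem algebra_main (n : ℕ) (yk v q : Fin n → ℝ) (U : Fin (n + 1) → ℝ) (M x0 p σ : ℝ)
    (hyk : ∀ k, 0 < yk k) (hx0 : 0 < x0) (hp : p = ∏ l, yk l)
    (hq : ∀ k, yk k * q k = p)
    (hσ : σ = Real.sqrt (1 / (x0 * p)))
    (hv : ∀ k, v k = U k.succ - U 0)
    (hM : M = x0 * U 0 + ∑ l, yk l * U l.succ)
    (hx0' : x0 = 1 - ∑ l, yk l) :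
    σ⁻¹ * ∑ k, (σ * (yk k * (0 - v k) + (v k - ∑ l, yk l * v l) * 1)
        + (yk k * (v k - ∑ l, yk l * v l)) *
          (1 / (2 * σ) * (-((x0 * p) ^ 2)⁻¹ * (x0 * q k + p * (-1)))))
      = (1 / 2) * ∑ a, (U a - M) := by
  have hp0 : 0 < p := hp ▸ Finset.prod_pos fun l _ => hyk l
  have hσ0 : 0 < σ := by rw [hσ]; positivity
  have hσ2 : σ * σ = 1 / (x0 * p) := by
    rw [hσ]; exact Real.mul_self_sqrt (by positivity)
  have hσ' : σ ≠ 0 := ne_of_gt hσ0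
  have hx0'' : x0 ≠ 0 := ne_of_gt hx0
  have hp' : p ≠ 0 := ne_of_gt hp0
  set vb := ∑ l, yk l * v l with hvb
  -- step A: pull σ⁻¹ inside
  have stepA : ∀ A B C : ℝ, σ⁻¹ * (σ * A + B * (1 / (2 * σ) * C))
      = A + B * C * (x0 * p) / 2 := by
    intro A B C
    have h2 : σ⁻¹ * σ⁻¹ = x0 * p := by
      rw [← mul_inv, hσ2]
      field_simp
    have h3 : σ * σ * (x0 * p) = 1 := by rw [hσ2]; field_simp
    field_simp
    linear_combination (-B * C) * h3
  rw [Finset.mul_sum]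
  rw [Finset.sum_congr rfl fun k _ => stepA _ _ _]
  -- step B: per-k simplification
  have stepB : ∀ k, (yk k * (0 - v k) + (v k - vb) * 1)
      + (yk k * (v k - vb)) * (-((x0 * p) ^ 2)⁻¹ * (x0 * q k + p * (-1))) * (x0 * p) / 2
      = v k / 2 - vb / 2 - yk k * v k + (yk k * v k) / (2 * x0) - (yk k * vb) / (2 * x0) := by
    intro k
    have hqk' : q k = p / yk k := by
      rw [eq_div_iff (ne_of_gt (hyk k))]
      linear_combination hq k
    have hy' : yk k ≠ 0 := ne_of_gt (hyk k)
    rw [hqk']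
    field_simp [hy', hx0'', hp']
    ring
  rw [Finset.sum_congr rfl fun k _ => stepB k]
  have reshape : ∀ k, (v k / 2 - vb / 2 - yk k * v k + yk k * v k / (2 * x0)
      - yk k * vb / (2 * x0))
      = v k * (1 / 2) + (yk k * v k) * (1 / (2 * x0) - 1) + yk k * (-(vb / (2 * x0)))
        + (-(vb / 2)) := by
    intro k
    field_simp
    ring
  rw [Finset.sum_congr rfl fun k _ => reshape k]
  simp only [Finset.sum_add_distrib, ← Finset.sum_mul, Finset.sum_const, Finset.card_univ,
    Fintype.card_fin, nsmul_eq_mul]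
  rw [Fin.sum_univ_succ (f := fun a => U a - M)]
  simp only [Finset.sum_sub_distrib, Finset.sum_const, Finset.card_univ, Fintype.card_fin,
    nsmul_eq_mul]
  rw [← hvb]
  have hSv : ∑ i : Fin n, v i = ∑ i : Fin n, U i.succ - (n : ℝ) * U 0 := by
    simp [hv, Finset.sum_sub_distrib]
  have hvb2 : vb = ∑ i : Fin n, yk i * U i.succ - (∑ i : Fin n, yk i) * U 0 := by
    rw [hvb]
    simp only [hv, mul_sub, Finset.sum_sub_distrib, Finset.sum_mul]
  have hs0 : (1 : ℝ) - ∑ l, yk l ≠ 0 := by rw [← hx0']; exact hx0''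
  rw [hSv, hvb2, hM, hx0']
  field_simp
  ring

variable {ι : Type*} [Fintype ι] [DecidableEq ι] {m : ι → ℕ}
variable (u : ι → (∀ j, Fin (m j + 1)) → ℝ) (i : ι)

theorem diff_coord (j : ι) (c : Fin (m j)) :
    Differentiable ℝ (fun z : ∀ j, Fin (m j) → ℝ => z j c) :=
  ((ContinuousLinearMap.proj (R := ℝ) (φ := fun _ : Fin (m j) => ℝ) c).comp
      (ContinuousLinearMap.proj (R := ℝ) (φ := fun j => Fin (m j) → ℝ) j)).differentiable

theorem diff_fullCoord (j : ι) (b : Fin (m j + 1)) :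
    Differentiable ℝ (fun z : ∀ j, Fin (m j) → ℝ => fullCoord m z j b) := by
  induction b using Fin.cases with
  | zero =>
    simp only [fullCoord, Fin.cons_zero]
    exact (differentiable_const 1).sub (Differentiable.fun_sum fun k _ => diff_coord j k)
  | succ c =>
    simp only [fullCoord, Fin.cons_succ]
    exact diff_coord j c

theorem diff_prod_aux {κ : Type*} [DecidableEq κ] (t : Finset κ)
    (g : κ → (∀ j, Fin (m j) → ℝ) → ℝ) (h : ∀ a ∈ t, Differentiable ℝ (g a)) :
    Differentiable ℝ (fun z => ∏ a ∈ t, g a z) := fun x =>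
  (HasFDerivAt.finset_prod fun a ha => ((h a ha) x).hasFDerivAt).differentiableAt

theorem diff_unilateral (a : Fin (m i + 1)) :
    Differentiable ℝ (fun z => unilateralPayoff m u i a (fullCoord m z)) := by
  unfold unilateralPayoff mixedPayoff
  refine Differentiable.fun_sum fun α _ => Differentiable.const_mul ?_ _
  refine diff_prod_aux univ _ fun j _ => ?_
  by_cases h : j = i
  · subst h
    simp only [Function.update_self]
    exact differentiable_const _
  · simp only [Function.update_of_ne h]
    exact diff_fullCoord j (α j)

theorem diff_effField (l : Fin (m i)) : Differentiable ℝ (effField m u i l) :=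
  (diff_unilateral u i l.succ).sub (diff_unilateral u i 0)

/-- `unilateralPayoff` does not depend on player `i`'s own coordinates. -/
theorem unilateral_update (a : Fin (m i + 1)) (z : ∀ j, Fin (m j) → ℝ)
    (w : Fin (m i) → ℝ) :
    unilateralPayoff m u i a (fullCoord m (Function.update z i w)) =
      unilateralPayoff m u i a (fullCoord m z) := by
  unfold unilateralPayoff
  congr 1
  funext j
  by_cases h : j = i
  · subst h; simp
  · simp only [Function.update_of_ne h]
    simp [fullCoord, Function.update_of_ne h]

/-- The projection killing player `i`'s coordinates, as a CLM. -/
def killCLM (m : ι → ℕ) (i : ι) :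
    (∀ j, Fin (m j) → ℝ) →L[ℝ] (∀ j, Fin (m j) → ℝ) :=
  ContinuousLinearMap.pi fun j =>
    if h : j = i then 0 else ContinuousLinearMap.proj (R := ℝ) (φ := fun j => Fin (m j) → ℝ) j

theorem killCLM_apply (z : ∀ j, Fin (m j) → ℝ) :
    killCLM m i z = Function.update z i 0 := by
  funext j
  by_cases h : j = i
  · subst h; simp [killCLM]
  · simp [killCLM, h, Function.update_of_ne h]

theorem effField_deriv_self (k l : Fin (m i)) (y : ∀ j, Fin (m j) → ℝ) :
    fderiv ℝ (effField m u i l) y (coordDir m i k) = 0 := by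
  have hcomp : effField m u i l = fun z => effField m u i l (killCLM m i z) := by
    funext z
    rw [killCLM_apply]
    unfold effField
    rw [unilateral_update, unilateral_update]
  have hd := (diff_effField u i l (killCLM m i y)).hasFDerivAt
  have h2 : HasFDerivAt (effField m u i l)
      ((fderiv ℝ (effField m u i l) (killCLM m i y)).comp (killCLM m i)) y := by
    have h3 := hd.comp y (killCLM m i).hasFDerivAt
    simp only [Function.comp_def] at h3
    rwa [← hcomp] at h3
  rw [h2.fderiv]
  have hzero : killCLM m i (coordDir m i k) = 0 := by
    rw [killCLM_apply]
    funext j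
    by_cases h : j = i
    · subst h; simp
    · simp [coordDir, Function.update_of_ne h]
  simp [ContinuousLinearMap.comp_apply, hzero]

/-- Multilinearity in player `i`'s own strategy. -/
theorem mixed_decomp (x : ∀ j, Fin (m j + 1) → ℝ) :
    mixedPayoff m u i x = ∑ a : Fin (m i + 1), x i a * unilateralPayoff m u i a x := by
  have key : ∀ (a : Fin (m i + 1)), unilateralPayoff m u i a x
      = ∑ α : ∀ j, Fin (m j + 1), u i α *
          ((if α i = a then (1:ℝ) else 0) * ∏ j ∈ univ.erase i, x j (α j)) := by
    intro a
    unfold unilateralPayoff mixedPayoff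
    refine Finset.sum_congr rfl fun α _ => ?_
    congr 1
    rw [← Finset.mul_prod_erase _ _ (mem_univ i)]
    congr 1
    · simp [Function.update_self]
    · exact Finset.prod_congr rfl fun j hj =>
        by rw [Function.update_of_ne (Finset.mem_erase.1 hj).1]
  rw [Finset.sum_congr rfl fun a _ => by rw [key a]]
  simp only [Finset.mul_sum]
  rw [Finset.sum_comm]
  unfold mixedPayoff
  refine Finset.sum_congr rfl fun α _ => ?_
  rw [← Finset.mul_prod_erase _ _ (mem_univ i)]
  rw [Finset.sum_congr rfl (fun a _ => by ring_nf :
    ∀ a ∈ (univ : Finset (Fin (m i + 1))),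
      x i a * (u i α * ((if α i = a then (1:ℝ) else 0) * ∏ j ∈ univ.erase i, x j (α j)))
      = (if α i = a then (1:ℝ) else 0) * (x i a * (u i α * ∏ j ∈ univ.erase i, x j (α j))))]
  simp only [ite_mul, one_mul, zero_mul, Finset.sum_ite_eq, mem_univ, if_true]
  ring



end Aux

/-- **The Shahshahani divergence of the effective replicator field** of a finite game
equals `(1/2) ∑_i ∑_{α_i} (u_i(α_i;x_{-i}) − u_i(x))` at every interior mixed profile. -/
theorem shahshahani_divergence_of_replicator
    {ι : Type*} [Fintype ι] [DecidableEq ι] (m : ι → ℕ)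
    (u : ι → (∀ j, Fin (m j + 1)) → ℝ) (y : ∀ j, Fin (m j) → ℝ)
    (hy : ∀ i k, 0 < y i k) (hy1 : ∀ i, ∑ k, y i k < 1) :
    shahDiv m u y = (1 / 2) * ∑ i, ∑ a : Fin (m i + 1),
      (unilateralPayoff m u i a (fullCoord m y) - mixedPayoff m u i (fullCoord m y)) := by
  unfold shahDiv
  rw [Finset.mul_sum]
  refine Finset.sum_congr rfl fun i _ => ?_
  have hx0 : (0:ℝ) < 1 - ∑ l, y i l := sub_pos.2 (hy1 i)
  have hp : (0:ℝ) < ∏ l, y i l := Finset.prod_pos fun l _ => hy i l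
  have key : ∀ k : Fin (m i),
      fderiv ℝ (fun z => sqrtDet m i z * effReplicator m u i k z) y (coordDir m i k)
      = sqrtDet m i y * (y i k * (0 - effField m u i k y)
          + (effField m u i k y - ∑ l, y i l * effField m u i l y) * 1)
        + (y i k * (effField m u i k y - ∑ l, y i l * effField m u i l y)) *
          (1 / (2 * sqrtDet m i y) * (-(((1 - ∑ l, y i l) * ∏ l, y i l) ^ 2)⁻¹ *
            ((1 - ∑ l, y i l) * (∏ b ∈ univ.erase k, y i b) + (∏ l, y i l) * (-1)))) := by
    intro k
    apply DD.fderiv_eq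
    have hvl : ∀ l, DD y (coordDir m i k) (effField m u i l) 0 := fun l =>
      ⟨fderiv ℝ (effField m u i l) y, ((diff_effField u i l) y).hasFDerivAt,
        effField_deriv_self u i k l y⟩
    have ha : DD y (coordDir m i k) (fun z => 1 - ∑ l, z i l) (-1) :=
      ((DD.const 1).sub (DD.sum univ (fun l z => z i l) (fun l => coordDir m i k i l)
        (fun l _ => DD.coord i l))).congr_r
        (by simp [coordDir, Pi.single_apply])
    have hb : DD y (coordDir m i k) (fun z => ∏ l, z i l)
        (∏ b ∈ univ.erase k, y i b) :=
      (DD.prod univ (fun l z => z i l) (fun l => coordDir m i k i l)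
        (fun l => DD.coord i l)).congr_r
        (by simp [coordDir, Pi.single_apply])
    have hA : DD y (coordDir m i k) (fun z => (1 - ∑ l, z i l) * ∏ l, z i l)
        ((1 - ∑ l, y i l) * (∏ b ∈ univ.erase k, y i b) + (∏ l, y i l) * (-1)) :=
      ha.mul hb
    have hOD : DD y (coordDir m i k) (fun z => 1 / ((1 - ∑ l, z i l) * ∏ l, z i l))
        (-(((1 - ∑ l, y i l) * ∏ l, y i l) ^ 2)⁻¹ *
          ((1 - ∑ l, y i l) * (∏ b ∈ univ.erase k, y i b) + (∏ l, y i l) * (-1))) :=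
      hA.one_div (ne_of_gt (mul_pos hx0 hp))
    have hS : DD y (coordDir m i k)
        (fun z => Real.sqrt (1 / ((1 - ∑ l, z i l) * ∏ l, z i l)))
        (1 / (2 * Real.sqrt (1 / ((1 - ∑ l, y i l) * ∏ l, y i l))) *
          (-(((1 - ∑ l, y i l) * ∏ l, y i l) ^ 2)⁻¹ *
            ((1 - ∑ l, y i l) * (∏ b ∈ univ.erase k, y i b) + (∏ l, y i l) * (-1)))) :=
      hOD.sqrt (ne_of_gt (by positivity))
    have hV : DD y (coordDir m i k) (fun z => ∑ l, z i l * effField m u i l z)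
        (effField m u i k y) :=
      (DD.sum univ (fun l z => z i l * effField m u i l z)
        (fun l => y i l * 0 + effField m u i l y * coordDir m i k i l)
        (fun l _ => (DD.coord i l).mul (hvl l))).congr_r
        (by simp [coordDir, Pi.single_apply])
    have hR : DD y (coordDir m i k)
        (fun z => z i k * (effField m u i k z - ∑ l, z i l * effField m u i l z))
        (y i k * (0 - effField m u i k y)
          + (effField m u i k y - ∑ l, y i l * effField m u i l y) * 1) :=
      ((DD.coord i k).mul ((hvl k).sub hV)).congr_r
        (by simp [coordDir, Pi.single_apply])
    simp only [sqrtDet, effReplicator]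
    exact (hS.mul hR).congr_r rfl
  rw [Finset.sum_congr rfl fun k _ => key k]
  have hq : ∀ k, y i k * ∏ b ∈ univ.erase k, y i b = ∏ l, y i l := fun k =>
    Finset.mul_prod_erase univ (y i) (mem_univ k)
  have hM : mixedPayoff m u i (fullCoord m y)
      = (1 - ∑ l, y i l) * unilateralPayoff m u i 0 (fullCoord m y)
        + ∑ l, y i l * unilateralPayoff m u i l.succ (fullCoord m y) := by
    rw [mixed_decomp u i (fullCoord m y), Fin.sum_univ_succ]
    simp [fullCoord]
  exact algebra_main (m i) (y i) (fun l => effField m u i l y)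
    (fun k => ∏ b ∈ univ.erase k, y i b)
    (fun a => unilateralPayoff m u i a (fullCoord m y))
    (mixedPayoff m u i (fullCoord m y))
    (1 - ∑ l, y i l) (∏ l, y i l) (sqrtDet m i y)
    (hy i) hx0 rfl hq rfl (fun k => rfl) hM rfl


end
end

section
/- The Shahshahani divergence of the effective replicator field of a finite game equals (1/2)-times the multilinear extension of the harmonicity function: div X̃(x) = (1/2) ∑_{α ∈ A} x_α F(α), where F(α) = ∑_{i ∈ N} ∑_{β_i ∈ A_i} (u_i(β_i; α_{-i}) − u_i(α_i; α_{-i})) and x_α = ∏_i x_{i,α_i}. -/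
open Finset

noncomputable section

section Helpers

variable {ι : Type*} [Fintype ι] [DecidableEq ι] (m : ι → ℕ)
  (u : ι → (∀ j, Fin (m j + 1)) → ℝ)

lemma fullCoord_sum (y : ∀ i, Fin (m i) → ℝ) (i : ι) :
    ∑ a, fullCoord m y i a = 1 := by
  show ∑ a, Fin.cons (1 - ∑ k, y i k) (y i) a = 1
  rw [Fin.sum_cons]
  ring

lemma update_piSplitAt_symm (i : ι) (a b : Fin (m i + 1))
    (β : ∀ j : {j // j ≠ i}, Fin (m j.1 + 1)) :
    Function.update ((Equiv.piSplitAt i (fun j => Fin (m j + 1))).symm (a, β)) i b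
      = (Equiv.piSplitAt i (fun j => Fin (m j + 1))).symm (b, β) := by
  funext j
  rcases eq_or_ne j i with rfl | h
  · simp [Equiv.piSplitAt]
  · simp [Equiv.piSplitAt, Function.update_of_ne h, h]

lemma sum_prod_split (x : ∀ j, Fin (m j + 1) → ℝ) (i : ι)
    (w : (∀ j, Fin (m j + 1)) → ℝ) :
    ∑ α : ∀ j, Fin (m j + 1), w α * ∏ j, x j (α j)
      = ∑ a, x i a * ∑ β : ∀ j : {j // j ≠ i}, Fin (m j.1 + 1),
          w ((Equiv.piSplitAt i (fun j => Fin (m j + 1))).symm (a, β))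
            * ∏ j, x j.1 (β j) := by
  rw [← Equiv.sum_comp (Equiv.piSplitAt i (fun j => Fin (m j + 1))).symm
      (fun α => w α * ∏ j, x j (α j)), Fintype.sum_prod_type]
  refine Finset.sum_congr rfl fun a _ => ?_
  rw [Finset.mul_sum]
  refine Finset.sum_congr rfl fun β _ => ?_
  have hp : (∏ j, x j ((Equiv.piSplitAt i (fun j => Fin (m j + 1))).symm (a, β) j))
      = x i a * ∏ j : {j // j ≠ i}, x j.1 (β j) := by
    rw [← Finset.mul_prod_erase Finset.univ _ (Finset.mem_univ i)]
    congr 1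
    · simp [Equiv.piSplitAt]
    · rw [Finset.prod_subtype (p := fun j => j ≠ i) (Finset.univ.erase i)
        (fun j => by simp [Finset.mem_erase])
        (fun j => x j ((Equiv.piSplitAt i (fun j => Fin (m j + 1))).symm (a, β) j))]
      refine Finset.prod_congr rfl fun j _ => ?_
      simp [Equiv.piSplitAt, j.2]
  rw [hp]; ring

lemma unilateralPayoff_split (i : ι) (b : Fin (m i + 1)) (x : ∀ j, Fin (m j + 1) → ℝ) :
    unilateralPayoff m u i b x
      = ∑ β : ∀ j : {j // j ≠ i}, Fin (m j.1 + 1),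
          u i ((Equiv.piSplitAt i (fun j => Fin (m j + 1))).symm (b, β))
            * ∏ j, x j.1 (β j) := by
  rw [unilateralPayoff, mixedPayoff, sum_prod_split m _ i (u i)]
  have hupd : ∀ (j : {j // j ≠ i}) (c : Fin (m j.1 + 1)),
      Function.update x i (fun b' => if b' = b then 1 else 0) j.1 c = x j.1 c := by
    intro j c; rw [Function.update_of_ne j.2]
  simp only [Function.update_self, hupd, ite_mul, one_mul, zero_mul]
  rw [Finset.sum_ite_eq' Finset.univ b]
  simp

lemma mixedPayoff_split (i : ι) (x : ∀ j, Fin (m j + 1) → ℝ) :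
    mixedPayoff m u i x = ∑ a, x i a * unilateralPayoff m u i a x := by
  rw [mixedPayoff, sum_prod_split m x i (u i)]
  exact Finset.sum_congr rfl fun a _ => by rw [unilateralPayoff_split]

lemma sum_prod_update (y : ∀ i, Fin (m i) → ℝ) (i : ι) (b : Fin (m i + 1)) :
    ∑ α : ∀ j, Fin (m j + 1), (∏ j, fullCoord m y j (α j)) * u i (Function.update α i b)
      = unilateralPayoff m u i b (fullCoord m y) := by
  have h := sum_prod_split m (fullCoord m y) i (fun α => u i (Function.update α i b))
  simp only [mul_comm] at h ⊢
  rw [h]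
  simp only [update_piSplitAt_symm]
  rw [← Finset.sum_mul, fullCoord_sum, one_mul, unilateralPayoff_split]
  exact Finset.sum_congr rfl fun β _ => by ring

lemma differentiable_finset_prod {E : Type*} [NormedAddCommGroup E] [NormedSpace ℝ E]
    {κ : Type*} [DecidableEq κ] {s : Finset κ} {f : κ → E → ℝ}
    (h : ∀ i ∈ s, Differentiable ℝ (f i)) :
    Differentiable ℝ (fun z => ∏ i ∈ s, f i z) := by
  intro x
  exact (HasFDerivAt.finset_prod (fun i hi => ((h i hi) x).hasFDerivAt)).differentiableAt

lemma differentiable_eval {κ : Type*} [Fintype κ] (n : κ → ℕ) (j : κ) (l : Fin (n j)) :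
    Differentiable ℝ (fun z : ∀ j', Fin (n j') → ℝ => z j l) := by
  exact ((ContinuousLinearMap.proj (R := ℝ) (φ := fun l : Fin (n j) => ℝ) l).comp
    (ContinuousLinearMap.proj (R := ℝ) (φ := fun j' : κ => Fin (n j') → ℝ) j)).differentiable

lemma differentiable_fullCoord_update (i : ι) (g : Fin (m i + 1) → ℝ) (j : ι)
    (a : Fin (m j + 1)) :
    Differentiable ℝ
      (fun z : ∀ j', Fin (m j') → ℝ => Function.update (fullCoord m z) i g j a) := by
  rcases eq_or_ne j i with rfl | h
  · simpa [Function.update_self] using differentiable_const (g a)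
  · simp only [Function.update_of_ne h]
    simp only [fullCoord]
    induction a using Fin.cases with
    | zero =>
        simp only [Fin.cons_zero]
        exact (differentiable_const 1).sub
          (Differentiable.fun_sum fun l _ => differentiable_eval m j l)
    | succ k' =>
        simp only [Fin.cons_succ]
        exact differentiable_eval m j k'

lemma differentiable_unilateral (i : ι) (b : Fin (m i + 1)) :
    Differentiable ℝ (fun z : ∀ j, Fin (m j) → ℝ =>
      unilateralPayoff m u i b (fullCoord m z)) := by
  show Differentiable ℝ (fun z => mixedPayoff m u i
    (Function.update (fullCoord m z) i (fun b' => if b' = b then 1 else 0)))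
  unfold mixedPayoff
  refine Differentiable.fun_sum fun α _ => (differentiable_const (u i α)).mul ?_
  exact differentiable_finset_prod fun j _ => differentiable_fullCoord_update m i _ j (α j)

lemma differentiable_effField (i : ι) (l : Fin (m i)) :
    Differentiable ℝ (effField m u i l) :=
  (differentiable_unilateral m u i l.succ).sub (differentiable_unilateral m u i 0)

lemma differentiable_effReplicator (i : ι) (k : Fin (m i)) :
    Differentiable ℝ (effReplicator m u i k) := by
  unfold effReplicator
  exact (differentiable_eval m i k).mul ((differentiable_effField m u i k).sub
    (Differentiable.fun_sum fun l _ =>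
      (differentiable_eval m i l).mul (differentiable_effField m u i l)))

lemma differentiableAt_sqrtDet (i : ι) {y : ∀ j, Fin (m j) → ℝ}
    (hy : ∀ k, 0 < y i k) (hy1 : ∑ k, y i k < 1) :
    DifferentiableAt ℝ (sqrtDet m i) y := by
  have hpos : 0 < (1 - ∑ k, y i k) * ∏ k, y i k := by
    apply mul_pos (by linarith) (Finset.prod_pos fun k _ => hy k)
  have hd : DifferentiableAt ℝ (fun z : ∀ j, Fin (m j) → ℝ =>
      (1 - ∑ k, z i k) * ∏ k, z i k) y := by
    refine DifferentiableAt.mul ?_ ?_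
    · exact ((differentiable_const 1).sub
        (Differentiable.fun_sum fun l _ => differentiable_eval m i l)).differentiableAt
    · exact (differentiable_finset_prod fun l _ => differentiable_eval m i l).differentiableAt
  have h1 : DifferentiableAt ℝ (fun z : ∀ j, Fin (m j) → ℝ =>
      ((1 - ∑ k, z i k) * ∏ k, z i k)⁻¹) y := hd.inv (ne_of_gt hpos)
  have h2 := h1.sqrt (inv_ne_zero (ne_of_gt hpos))
  unfold sqrtDet
  simp only [one_div]
  exact h2

lemma hasDerivAt_line {E : Type*} [NormedAddCommGroup E] [NormedSpace ℝ E]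
    {f : E → ℝ} {y v : E} (hf : DifferentiableAt ℝ f y) :
    HasDerivAt (fun t : ℝ => f (y + t • v)) (fderiv ℝ f y v) 0 := by
  have hline : HasDerivAt (fun t : ℝ => y + t • v) v 0 := by
    simpa using ((hasDerivAt_id (0 : ℝ)).smul_const v).const_add y
  exact hf.hasFDerivAt.comp_hasDerivAt_of_eq 0 hline (by simp)

lemma oneD (x0 yk c A vk : ℝ) (hx0 : 0 < x0) (hyk : 0 < yk) (hc : 0 < c) :
    HasDerivAt
      (fun t : ℝ => Real.sqrt (((x0 - t) * ((yk + t) * c))⁻¹) * ((yk + t) * (A - t * vk)))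
      (Real.sqrt ((x0 * (yk * c))⁻¹) * (A * (yk + x0) / (2 * x0) - yk * vk)) 0 := by
  have hP : (0:ℝ) < x0 * (yk * c) := mul_pos hx0 (mul_pos hyk hc)
  have hw0ne : (x0 - 0) * ((yk + 0) * c) ≠ 0 := by simpa using hP.ne'
  have h1 : HasDerivAt (fun t : ℝ => x0 - t) (-1) 0 := by
    simpa using (hasDerivAt_id (0:ℝ)).const_sub x0
  have h2 : HasDerivAt (fun t : ℝ => (yk + t) * c) (1 * c) 0 :=
    ((hasDerivAt_id (0:ℝ)).const_add yk).mul_const c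
  have hwd := h1.mul h2
  have hinv := hwd.inv hw0ne
  have hsq := hinv.sqrt (inv_ne_zero hw0ne)
  have h3 : HasDerivAt (fun t : ℝ => A - t * vk) (-(1 * vk)) 0 :=
    ((hasDerivAt_id (0:ℝ)).mul_const vk).const_sub A
  have h4 : HasDerivAt (fun t : ℝ => (yk + t) * (A - t * vk))
      (1 * (A - 0 * vk) + (yk + 0) * -(1 * vk)) 0 :=
    ((hasDerivAt_id (0:ℝ)).const_add yk).mul h3
  have htot := hsq.mul h4
  refine htot.congr_deriv ?_
  symm
  have h0 : ((x0 - 0) * ((yk + 0) * c)) = x0 * (yk * c) := by ring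
  simp only [Pi.mul_apply, Pi.inv_apply]
  rw [h0]
  set q := Real.sqrt ((x0 * (yk * c))⁻¹) with hqdef
  have hqpos : 0 < q := Real.sqrt_pos.mpr (inv_pos.mpr hP)
  have hq : q * q = (x0 * (yk * c))⁻¹ :=
    Real.mul_self_sqrt (inv_nonneg.mpr hP.le)
  have hq1 : (q * (x0 * (yk * c))) * q = 1 := by
    rw [mul_comm q _, mul_assoc, hq]
    field_simp
  have hqinv : q⁻¹ = q * (x0 * (yk * c)) := inv_eq_of_mul_eq_one_left hq1
  rw [div_eq_mul_inv _ (2 * q), mul_inv, hqinv]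
  field_simp
  ring

lemma key_fderiv (y : ∀ j, Fin (m j) → ℝ) (hy : ∀ i k, 0 < y i k)
    (hy1 : ∀ i, ∑ k, y i k < 1) (i : ι) (k : Fin (m i)) :
    fderiv ℝ (fun z => sqrtDet m i z * effReplicator m u i k z) y (coordDir m i k)
      = sqrtDet m i y *
          ((effField m u i k y - ∑ l, y i l * effField m u i l y)
              * (y i k + (1 - ∑ l, y i l)) / (2 * (1 - ∑ l, y i l))
            - y i k * effField m u i k y) := by
  set e := coordDir m i k with he
  have he_i : ∀ l, e i l = if l = k then 1 else 0 := by
    intro l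
    simp [he, coordDir, Function.update_self, Pi.single_apply]
  have he_j : ∀ j, j ≠ i → e j = 0 := by
    intro j h
    simp [he, coordDir, Function.update_of_ne h]
  have hF1 : ∀ (t : ℝ) l, (y + t • e) i l = y i l + t * (if l = k then 1 else 0) := by
    intro t l
    simp [he_i l]
  have hF2 : ∀ (t : ℝ) j, j ≠ i → (y + t • e) j = y j := by
    intro t j h
    funext l
    simp [he_j j h]
  have hupd : ∀ (t : ℝ) (g : Fin (m i + 1) → ℝ),
      Function.update (fullCoord m (y + t • e)) i g = Function.update (fullCoord m y) i g := by
    intro t g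
    funext j
    rcases eq_or_ne j i with rfl | h
    · simp
    · simp only [Function.update_of_ne h]
      unfold fullCoord
      rw [hF2 t j h]
  have heff : ∀ (t : ℝ) (l : Fin (m i)), effField m u i l (y + t • e) = effField m u i l y := by
    intro t l
    unfold effField unilateralPayoff
    rw [hupd, hupd]
  -- abbreviations
  set s := ∑ l, y i l with hs
  set yk := y i k with hyk
  set c := ∏ l ∈ Finset.univ.erase k, y i l with hc
  set vk := effField m u i k y with hvk
  set V := ∑ l, y i l * effField m u i l y with hV
  have hsum : ∀ t : ℝ, ∑ l, (y + t • e) i l = s + t := by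
    intro t
    simp only [hF1]
    rw [Finset.sum_add_distrib]
    congr 1
    simp [mul_ite, Finset.sum_ite_eq']
  have hprod : ∀ t : ℝ, ∏ l, (y + t • e) i l = (yk + t) * c := by
    intro t
    rw [← Finset.mul_prod_erase Finset.univ _ (Finset.mem_univ k)]
    congr 1
    · rw [hF1]; simp; rfl
    · refine Finset.prod_congr rfl fun l hl => ?_
      rw [hF1]
      simp [(Finset.mem_erase.mp hl).1]
  have hinner : ∀ t : ℝ, ∑ l, (y + t • e) i l * effField m u i l (y + t • e)
      = V + t * vk := by
    intro t
    have hterm : ∀ l, (y + t • e) i l * effField m u i l (y + t • e)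
        = y i l * effField m u i l y + (if l = k then t * effField m u i l y else 0) := by
      intro l
      rw [heff, hF1]
      by_cases h : l = k <;> simp [h] <;> ring
    rw [Finset.sum_congr rfl fun l _ => hterm l, Finset.sum_add_distrib,
      Finset.sum_ite_eq' Finset.univ k]
    simp [hV, hvk]
  have hline_eq : (fun t : ℝ => sqrtDet m i (y + t • e) * effReplicator m u i k (y + t • e))
      = fun t : ℝ => Real.sqrt ((((1 - s) - t) * ((yk + t) * c))⁻¹)
          * ((yk + t) * ((vk - V) - t * vk)) := by
    funext t
    congr 1
    · unfold sqrtDet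
      rw [hsum, hprod, one_div]
      congr 2
      ring
    · unfold effReplicator
      rw [hF1, hinner, heff, if_pos rfl]
      ring
  have hx0 : 0 < 1 - s := by
    have := hy1 i
    simp only [hs]
    linarith
  have hykpos : 0 < yk := hy i k
  have hcpos : 0 < c := Finset.prod_pos fun l _ => hy i l
  have hprod0 : ∏ l, y i l = yk * c :=
    (Finset.mul_prod_erase Finset.univ _ (Finset.mem_univ k)).symm
  have hdiff : DifferentiableAt ℝ (fun z => sqrtDet m i z * effReplicator m u i k z) y :=
    (differentiableAt_sqrtDet m i (fun l => hy i l) (hy1 i)).mul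
      ((differentiable_effReplicator m u i k) y)
  have hmain : HasDerivAt
      (fun t : ℝ => sqrtDet m i (y + t • e) * effReplicator m u i k (y + t • e))
      (fderiv ℝ (fun z => sqrtDet m i z * effReplicator m u i k z) y e) 0 :=
    hasDerivAt_line hdiff
  rw [hline_eq] at hmain
  have hclean := oneD (1 - s) yk c (vk - V) vk hx0 hykpos hcpos
  have := hmain.unique hclean
  rw [this]
  have hsd : sqrtDet m i y = Real.sqrt (((1 - s) * (yk * c))⁻¹) := by
    unfold sqrtDet
    rw [hprod0, one_div]
  rw [hsd]

lemma per_player (y : ∀ j, Fin (m j) → ℝ) (hy : ∀ i k, 0 < y i k)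
    (hy1 : ∀ i, ∑ k, y i k < 1) (i : ι) :
    ∑ k : Fin (m i),
        ((effField m u i k y - ∑ l, y i l * effField m u i l y)
            * (y i k + (1 - ∑ l, y i l)) / (2 * (1 - ∑ l, y i l))
          - y i k * effField m u i k y)
      = ((∑ a, unilateralPayoff m u i a (fullCoord m y))
          - ((m i : ℝ) + 1) * mixedPayoff m u i (fullCoord m y)) / 2 := by
  have hx0 : 0 < 1 - ∑ l, y i l := by linarith [hy1 i]
  set v := fun l : Fin (m i) => effField m u i l y with hv
  set V := ∑ l, y i l * v l with hV
  set U := fun a : Fin (m i + 1) => unilateralPayoff m u i a (fullCoord m y) with hU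
  set s := ∑ l, y i l with hs
  -- step a : fold the sum
  have e1 : ∑ k : Fin (m i), ((v k - V) * (y i k + (1 - s)) / (2 * (1 - s)) - y i k * v k)
      = (∑ k, (v k - V) * (y i k + (1 - s))) / (2 * (1 - s)) - V := by
    rw [Finset.sum_sub_distrib, ← Finset.sum_div, hV]
  have e2 : ∑ k, (v k - V) * (y i k + (1 - s))
      = V + (1 - s) * (∑ k, v k) - s * V - (m i : ℝ) * ((1 - s) * V) := by
    have : ∀ k ∈ Finset.univ, (v k - V) * (y i k + (1 - s))
        = y i k * v k + (1 - s) * v k - V * y i k - (1 - s) * V := fun k _ => by ring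
    rw [Finset.sum_congr rfl this]
    rw [Finset.sum_sub_distrib, Finset.sum_sub_distrib, Finset.sum_add_distrib,
      ← Finset.mul_sum, ← Finset.mul_sum, Finset.sum_const, Finset.card_univ,
      Fintype.card_fin, nsmul_eq_mul]
    rw [hV, hs]
    ring
  -- step b : express ∑ v and V via U and P
  have hveq : ∀ k : Fin (m i), v k = U k.succ - U 0 := fun k => rfl
  have hS1 : ∑ k, v k = (∑ a, U a) - ((m i : ℝ) + 1) * U 0 := by
    rw [Fin.sum_univ_succ (f := U)]
    rw [Finset.sum_congr rfl fun k _ => hveq k, Finset.sum_sub_distrib,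
      Finset.sum_const, Finset.card_univ, Fintype.card_fin, nsmul_eq_mul]
    ring
  have hP : mixedPayoff m u i (fullCoord m y) = (1 - s) * U 0 + ∑ l, y i l * U l.succ := by
    rw [mixedPayoff_split m u i, Fin.sum_univ_succ]
    simp only [fullCoord, Fin.cons_zero, Fin.cons_succ, hU, hs]
  have hVP : V = mixedPayoff m u i (fullCoord m y) - U 0 := by
    rw [hP, hV]
    have : ∀ l ∈ Finset.univ, y i l * v l = y i l * U l.succ - y i l * U 0 := by
      intro l _
      rw [hveq l]; ring
    rw [Finset.sum_congr rfl this, Finset.sum_sub_distrib, ← Finset.sum_mul, ← hs]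
    ring
  rw [e1, e2, hVP, hS1]
  field_simp
  ring

theorem shahshahani_divergence_eq_harmonicity_extension'
    (y : ∀ j, Fin (m j) → ℝ)
    (hy : ∀ i k, 0 < y i k) (hy1 : ∀ i, ∑ k, y i k < 1) :
    (∑ i, (sqrtDet m i y)⁻¹ *
      ∑ k, fderiv ℝ (fun z => sqrtDet m i z * effReplicator m u i k z) y (coordDir m i k))
      = (1 / 2) * ∑ α : ∀ j, Fin (m j + 1),
      (∏ j, fullCoord m y j (α j)) *
        ∑ i, ∑ b : Fin (m i + 1), (u i (Function.update α i b) - u i α) := by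
  have hsd_pos : ∀ i, 0 < sqrtDet m i y := by
    intro i
    unfold sqrtDet
    apply Real.sqrt_pos.mpr
    have h1 : 0 < (1 - ∑ k, y i k) * ∏ k, y i k :=
      mul_pos (by linarith [hy1 i]) (Finset.prod_pos fun k _ => hy i k)
    positivity
  -- LHS
  have hLHS : ∀ i, (sqrtDet m i y)⁻¹ *
      ∑ k, fderiv ℝ (fun z => sqrtDet m i z * effReplicator m u i k z) y (coordDir m i k)
      = ((∑ a, unilateralPayoff m u i a (fullCoord m y))
          - ((m i : ℝ) + 1) * mixedPayoff m u i (fullCoord m y)) / 2 := by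
    intro i
    rw [Finset.sum_congr rfl fun k _ => key_fderiv m u y hy hy1 i k,
      ← Finset.mul_sum, ← mul_assoc, inv_mul_cancel₀ (hsd_pos i).ne', one_mul]
    exact per_player m u y hy hy1 i
  rw [Finset.sum_congr rfl fun i _ => hLHS i]
  -- RHS
  have hmix : ∀ i, ∑ α : ∀ j, Fin (m j + 1), (∏ j, fullCoord m y j (α j)) * u i α
      = mixedPayoff m u i (fullCoord m y) := by
    intro i
    unfold mixedPayoff
    exact Finset.sum_congr rfl fun α _ => mul_comm _ _
  have hrhs : ∑ α : ∀ j, Fin (m j + 1), (∏ j, fullCoord m y j (α j)) *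
        ∑ i, ∑ b : Fin (m i + 1), (u i (Function.update α i b) - u i α)
      = ∑ i, ((∑ b, unilateralPayoff m u i b (fullCoord m y))
          - ((m i : ℝ) + 1) * mixedPayoff m u i (fullCoord m y)) := by
    simp only [Finset.mul_sum]
    rw [Finset.sum_comm]
    refine Finset.sum_congr rfl fun i _ => ?_
    rw [Finset.sum_comm]
    have hb : ∀ b : Fin (m i + 1), ∑ α : ∀ j, Fin (m j + 1),
        (∏ j, fullCoord m y j (α j)) * (u i (Function.update α i b) - u i α)
        = unilateralPayoff m u i b (fullCoord m y) - mixedPayoff m u i (fullCoord m y) := by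
      intro b
      have : ∀ α ∈ Finset.univ, (∏ j, fullCoord m y j (α j)) * (u i (Function.update α i b) - u i α)
          = (∏ j, fullCoord m y j (α j)) * u i (Function.update α i b)
            - (∏ j, fullCoord m y j (α j)) * u i α := fun α _ => by ring
      rw [Finset.sum_congr rfl this, Finset.sum_sub_distrib, sum_prod_update m u y i b, hmix i]
    rw [Finset.sum_congr rfl fun b _ => hb b, Finset.sum_sub_distrib,
      Finset.sum_const, Finset.card_univ, Fintype.card_fin, nsmul_eq_mul]
    push_cast
    ring
  rw [hrhs, Finset.mul_sum]
  exact Finset.sum_congr rfl fun i _ => by ring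

end Helpers

/-- **The Shahshahani divergence of the effective replicator field equals one half of
the multilinear extension of the harmonicity function**:
`div X̃(x) = (1/2) ∑_{α} x_α F(α)` where
`F(α) = ∑_i ∑_{β_i} (u_i(β_i;α_{-i}) − u_i(α_i;α_{-i}))` and `x_α = ∏_i x_{i,α_i}`. -/
theorem shahshahani_divergence_eq_harmonicity_extension
    {ι : Type*} [Fintype ι] [DecidableEq ι] (m : ι → ℕ)
    (u : ι → (∀ j, Fin (m j + 1)) → ℝ) (y : ∀ j, Fin (m j) → ℝ)
    (hy : ∀ i k, 0 < y i k) (hy1 : ∀ i, ∑ k, y i k < 1) :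
    shahDiv m u y = (1 / 2) * ∑ α : ∀ j, Fin (m j + 1),
      (∏ j, fullCoord m y j (α j)) *
        ∑ i, ∑ b : Fin (m i + 1), (u i (Function.update α i b) - u i α) := by
  unfold shahDiv
  exact shahshahani_divergence_eq_harmonicity_extension' m u y hy hy1

end
end

section
/- A finite game is harmonic (i.e., ∑_{i} ∑_{β_i ∈ A_i} (u_i(β_i; α_{-i}) − u_i(α_i; α_{-i})) = 0 for all pure profiles α) if and only if it is incompressible, i.e., the Shahshahani divergence of its effective replicator field vanishes identically on the interior of the strategy space. -/
open Finset

noncomputable section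

set_option linter.unusedSectionVars false
set_option maxHeartbeats 1000000
section
namespace HIC

variable {ι : Type*} [Fintype ι] [DecidableEq ι] (m : ι → ℕ)

/-- Coordinate evaluation as a continuous linear map. -/
def ev (i : ι) (k : Fin (m i)) : (∀ j, Fin (m j) → ℝ) →L[ℝ] ℝ :=
  (ContinuousLinearMap.proj k).comp
    (ContinuousLinearMap.proj (R := ℝ) (φ := fun j => Fin (m j) → ℝ) i)

@[simp] lemma ev_apply (i : ι) (k : Fin (m i)) (z : ∀ j, Fin (m j) → ℝ) :
    ev m i k z = z i k := rfl

@[simp] lemma ev_coordDir (i : ι) (k l : Fin (m i)) :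
    ev m i l (coordDir m i k) = if l = k then 1 else 0 := by
  simp [ev, coordDir, Pi.single_apply]

/-- Kill player `i`'s coordinates. -/
def Qc (i : ι) : (∀ j, Fin (m j) → ℝ) →L[ℝ] (∀ j, Fin (m j) → ℝ) :=
  ContinuousLinearMap.pi (fun j => if j = i then 0 else ContinuousLinearMap.proj j)

lemma Qc_apply (i : ι) (z : ∀ j, Fin (m j) → ℝ) (j : ι) :
    Qc m i z j = if j = i then 0 else z j := by
  simp only [Qc, ContinuousLinearMap.pi_apply]
  split <;> rfl

lemma Qc_coordDir (i : ι) (k : Fin (m i)) : Qc m i (coordDir m i k) = 0 := by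
  funext j
  rw [Qc_apply]
  split
  · rfl
  · next h => simp [coordDir, Function.update_of_ne h]


variable (u : ι → (∀ j, Fin (m j + 1)) → ℝ)

lemma unilateral_eq_of (i : ι) (a : Fin (m i + 1)) {x x' : ∀ j, Fin (m j + 1) → ℝ}
    (h : ∀ j, j ≠ i → x j = x' j) :
    unilateralPayoff m u i a x = unilateralPayoff m u i a x' := by
  unfold unilateralPayoff
  congr 1
  funext j
  by_cases hj : j = i
  · subst hj; simp
  · simp [Function.update_of_ne hj, h j hj]

lemma effField_Qc (i : ι) (l : Fin (m i)) (z : ∀ j, Fin (m j) → ℝ) :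
    effField m u i l (Qc m i z) = effField m u i l z := by
  have h : ∀ j, j ≠ i → fullCoord m (Qc m i z) j = fullCoord m z j := by
    intro j hj
    unfold fullCoord
    rw [Qc_apply, if_neg hj]
  unfold effField
  rw [unilateral_eq_of m u i _ h, unilateral_eq_of m u i _ h]

lemma diff_fullCoord (j : ι) (b : Fin (m j + 1)) :
    Differentiable ℝ (fun z : ∀ j, Fin (m j) → ℝ => fullCoord m z j b) := by
  induction b using Fin.cases with
  | zero =>
    simp only [fullCoord, Fin.cons_zero]
    exact (differentiable_const (1:ℝ)).sub
      (Differentiable.fun_sum fun l _ => (ev m j l).differentiable)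
  | succ k =>
    simp only [fullCoord, Fin.cons_succ]
    exact (ev m j k).differentiable

lemma diff_finset_prod {E : Type*} [NormedAddCommGroup E] [NormedSpace ℝ E]
    {κ : Type*} [DecidableEq κ] {s : Finset κ} {f : κ → E → ℝ}
    (h : ∀ i ∈ s, Differentiable ℝ (f i)) :
    Differentiable ℝ (fun x => ∏ i ∈ s, f i x) := fun x =>
  (HasFDerivAt.finset_prod (fun i hi => ((h i hi x).hasFDerivAt))).differentiableAt

lemma diff_uni (i : ι) (a : Fin (m i + 1)) :
    Differentiable ℝ (fun z => unilateralPayoff m u i a (fullCoord m z)) := by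
  unfold unilateralPayoff mixedPayoff
  apply Differentiable.fun_sum
  intro α _
  apply (differentiable_const (u i α)).mul
  apply diff_finset_prod
  intro j _
  by_cases hj : j = i
  · subst hj
    simp only [Function.update_self]
    exact differentiable_const _
  · simp only [Function.update_of_ne hj]
    exact diff_fullCoord m j (α j)

lemma diff_effField (i : ι) (l : Fin (m i)) :
    Differentiable ℝ (effField m u i l) := by
  unfold effField
  exact (diff_uni m u i _).sub (diff_uni m u i _)

lemma effField_hasFDeriv (i : ι) (l : Fin (m i)) (y : ∀ j, Fin (m j) → ℝ) :
    HasFDerivAt (effField m u i l)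
      ((fderiv ℝ (effField m u i l) (Qc m i y)).comp (Qc m i)) y := by
  have h := ((diff_effField m u i l) (Qc m i y)).hasFDerivAt.comp y (Qc m i).hasFDerivAt
  have he : (effField m u i l) ∘ (Qc m i) = effField m u i l :=
    funext fun z => effField_Qc m u i l z
  rwa [he] at h

lemma effField_deriv_coordDir (i : ι) (l k : Fin (m i)) (y : ∀ j, Fin (m j) → ℝ) :
    ((fderiv ℝ (effField m u i l) (Qc m i y)).comp (Qc m i)) (coordDir m i k) = 0 := by
  rw [ContinuousLinearMap.comp_apply, Qc_coordDir, map_zero]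

lemma alg_step (t x0 Pr E yk a W : ℝ) (ht : 0 < t) (ht2 : t^2 = x0 * Pr)
    (hE : E * yk = Pr) (hx0 : x0 ≠ 0) (hPr : Pr ≠ 0) :
    t * (t⁻¹ * (a - W - yk * a) +
        yk * (a - W) * (-((x0 * Pr)^2)⁻¹ / (2 * t⁻¹) * (x0 * E - Pr)))
    = (1/2) * (a - W) + (yk * (a - W))/(2 * x0) - yk * a := by
  have ht' : t ≠ 0 := ht.ne'
  have hP : x0 * Pr ≠ 0 := mul_ne_zero hx0 hPr
  field_simp
  linear_combination (-(a-W)*yk*(x0*E-Pr)) * ht2 - (x0^2*Pr*(a-W)) * hE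

lemma inner_sum (i : ι) (y : ∀ j, Fin (m j) → ℝ)
    (hpos : ∀ l, 0 < y i l) (hs : ∑ l, y i l < 1) :
    (sqrtDet m i y)⁻¹ *
      ∑ k, fderiv ℝ (fun z => sqrtDet m i z * effReplicator m u i k z) y (coordDir m i k)
    = (1/2) * (∑ k, effField m u i k y
        - ((m i : ℝ) + 1) * ∑ l, y i l * effField m u i l y) := by
  classical
  have hx0 : (0:ℝ) < 1 - ∑ l, y i l := by linarith
  have hPr : (0:ℝ) < ∏ l, y i l := Finset.prod_pos (fun l _ => hpos l)
  have hP : (0:ℝ) < (1 - ∑ l, y i l) * ∏ l, y i l := mul_pos hx0 hPr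
  have hPne : ((1 - ∑ l, y i l) * ∏ l, y i l) ≠ 0 := hP.ne'
  -- derivative of the sum of player i's coordinates
  have hsum : HasFDerivAt (fun z : ∀ j, Fin (m j) → ℝ => ∑ l, z i l)
      (∑ l, (ev m i l : (∀ j, Fin (m j) → ℝ) →L[ℝ] ℝ)) y :=
    HasFDerivAt.fun_sum (fun l _ => (ev m i l).hasFDerivAt)
  have hx0' : HasFDerivAt (fun z : ∀ j, Fin (m j) → ℝ => 1 - ∑ l, z i l)
      (-(∑ l, (ev m i l : (∀ j, Fin (m j) → ℝ) →L[ℝ] ℝ))) y := hsum.const_sub 1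
  have hprod : HasFDerivAt (fun z : ∀ j, Fin (m j) → ℝ => ∏ l, z i l)
      (∑ l, (∏ j ∈ Finset.univ.erase l, y i j) •
        (ev m i l : (∀ j, Fin (m j) → ℝ) →L[ℝ] ℝ)) y :=
    HasFDerivAt.finset_prod (fun l _ => (ev m i l).hasFDerivAt)
  have hPd : HasFDerivAt (fun z : ∀ j, Fin (m j) → ℝ => (1 - ∑ l, z i l) * ∏ l, z i l)
      ((1 - ∑ l, y i l) • (∑ l, (∏ j ∈ Finset.univ.erase l, y i j) •
          (ev m i l : (∀ j, Fin (m j) → ℝ) →L[ℝ] ℝ))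
        + (∏ l, y i l) • (-(∑ l, (ev m i l : (∀ j, Fin (m j) → ℝ) →L[ℝ] ℝ)))) y :=
    hx0'.mul hprod
  have hsd : HasFDerivAt (fun z : ∀ j, Fin (m j) → ℝ =>
      Real.sqrt ((1 - ∑ l, z i l) * ∏ l, z i l)⁻¹)
      (((-((((1 - ∑ l, y i l) * ∏ l, y i l)) ^ 2)⁻¹) /
          (2 * Real.sqrt (((1 - ∑ l, y i l) * ∏ l, y i l))⁻¹)) •
        ((1 - ∑ l, y i l) • (∑ l, (∏ j ∈ Finset.univ.erase l, y i j) •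
            (ev m i l : (∀ j, Fin (m j) → ℝ) →L[ℝ] ℝ))
          + (∏ l, y i l) • (-(∑ l, (ev m i l : (∀ j, Fin (m j) → ℝ) →L[ℝ] ℝ))))) y :=
    HasDerivAt.comp_hasFDerivAt (h₂ := fun y => Real.sqrt y⁻¹) y ((hasDerivAt_inv hPne).sqrt (inv_ne_zero hPne)) hPd
  -- entries and sums
  have key : ∀ k : Fin (m i),
      fderiv ℝ (fun z => sqrtDet m i z * effReplicator m u i k z) y (coordDir m i k)
      = Real.sqrt (((1 - ∑ l, y i l) * ∏ l, y i l))⁻¹ *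
          ((effField m u i k y - ∑ l, y i l * effField m u i l y)
            - y i k * effField m u i k y)
        + (y i k * (effField m u i k y - ∑ l, y i l * effField m u i l y)) *
          (((-((((1 - ∑ l, y i l) * ∏ l, y i l)) ^ 2)⁻¹) /
              (2 * Real.sqrt (((1 - ∑ l, y i l) * ∏ l, y i l))⁻¹)) *
            ((1 - ∑ l, y i l) * (∏ j ∈ Finset.univ.erase k, y i j) - ∏ l, y i l)) := by
    intro k
    have hV : ∀ l : Fin (m i), HasFDerivAt (effField m u i l)
        ((fderiv ℝ (effField m u i l) (Qc m i y)).comp (Qc m i)) y :=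
      fun l => effField_hasFDeriv m u i l y
    have hW : HasFDerivAt (fun z : ∀ j, Fin (m j) → ℝ => ∑ l, z i l * effField m u i l z)
        (∑ l, (y i l • ((fderiv ℝ (effField m u i l) (Qc m i y)).comp (Qc m i))
          + effField m u i l y • (ev m i l : (∀ j, Fin (m j) → ℝ) →L[ℝ] ℝ))) y :=
      HasFDerivAt.fun_sum (fun l _ => (ev m i l).hasFDerivAt.mul (hV l))
    have hR : HasFDerivAt (fun z : ∀ j, Fin (m j) → ℝ =>
        z i k * (effField m u i k z - ∑ l, z i l * effField m u i l z))
        (y i k • (((fderiv ℝ (effField m u i k) (Qc m i y)).comp (Qc m i))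
            - ∑ l, (y i l • ((fderiv ℝ (effField m u i l) (Qc m i y)).comp (Qc m i))
              + effField m u i l y • (ev m i l : (∀ j, Fin (m j) → ℝ) →L[ℝ] ℝ)))
          + (effField m u i k y - ∑ l, y i l * effField m u i l y) •
            (ev m i k : (∀ j, Fin (m j) → ℝ) →L[ℝ] ℝ)) y :=
      (ev m i k).hasFDerivAt.mul ((hV k).sub hW)
    have hfull := (hsd.fun_mul hR).fderiv
    have hgoal : (fun z => sqrtDet m i z * effReplicator m u i k z)
        = fun z : ∀ j, Fin (m j) → ℝ =>
            Real.sqrt ((1 - ∑ l, z i l) * ∏ l, z i l)⁻¹ *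
              (z i k * (effField m u i k z - ∑ l, z i l * effField m u i l z)) := by
      funext z
      simp [sqrtDet, effReplicator, one_div]
    rw [hgoal, hfull]
    have hV0 : ∀ l : Fin (m i),
        ((fderiv ℝ (effField m u i l) (Qc m i y)).comp (Qc m i)) (coordDir m i k) = 0 :=
      fun l => effField_deriv_coordDir m u i l k y
    simp only [ContinuousLinearMap.add_apply, ContinuousLinearMap.coe_smul',
      Pi.smul_apply, ContinuousLinearMap.coe_sum', Finset.sum_apply,
      ContinuousLinearMap.neg_apply, ContinuousLinearMap.sub_apply, hV0,
      ev_coordDir, smul_eq_mul, mul_ite, mul_one, mul_zero,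
      Finset.sum_ite_eq', Finset.mem_univ, if_true, zero_sub, add_zero, zero_add,
      smul_zero, sub_zero, neg_zero, mul_neg, neg_neg]
    ring
  rw [Finset.sum_congr rfl (fun k _ => key k), Finset.mul_sum]
  simp only [sqrtDet, one_div, Real.sqrt_inv, inv_inv]
  have ht0 : 0 < Real.sqrt ((1 - ∑ l, y i l) * ∏ l, y i l) := Real.sqrt_pos.2 hP
  have ht2 : (Real.sqrt ((1 - ∑ l, y i l) * ∏ l, y i l))^2
      = (1 - ∑ l, y i l) * ∏ l, y i l := Real.sq_sqrt hP.le
  rw [Finset.sum_congr rfl (fun x _ => alg_step _ _ _ _ _ _ _ ht0 ht2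
    (Finset.prod_erase_mul _ _ (Finset.mem_univ x)) hx0.ne' hPr.ne')]
  have h1 : ∑ x, y i x * (effField m u i x y - ∑ l, y i l * effField m u i l y)
      = (1 - ∑ k, y i k) * ∑ l, y i l * effField m u i l y := by
    simp only [mul_sub]
    rw [Finset.sum_sub_distrib, ← Finset.sum_mul]
    ring
  rw [Finset.sum_sub_distrib, Finset.sum_add_distrib, ← Finset.mul_sum,
    Finset.sum_sub_distrib, Finset.sum_const, Finset.card_univ, Fintype.card_fin,
    ← Finset.sum_div, h1, nsmul_eq_mul]
  field_simp
  ring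

/-! ### Algebraic identities for the multilinear extension -/

lemma prod_update_eval (i : ι) (x : ∀ j, Fin (m j + 1) → ℝ)
    (w : Fin (m i + 1) → ℝ) (α : ∀ j, Fin (m j + 1)) :
    ∏ j, Function.update x i w j (α j)
      = w (α i) * ∏ j ∈ Finset.univ.erase i, x j (α j) := by
  have hf : (fun j => Function.update x i w j (α j))
      = Function.update (fun j => x j (α j)) i (w (α i)) := by
    funext j
    by_cases hj : j = i
    · subst hj; simp
    · simp [Function.update_of_ne hj]
  calc ∏ j, Function.update x i w j (α j)
      = ∏ j, Function.update (fun j => x j (α j)) i (w (α i)) j := by rw [hf]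
    _ = w (α i) * ∏ j ∈ Finset.univ.erase i, x j (α j) := by
        rw [Finset.prod_update_of_mem (Finset.mem_univ i), ← Finset.erase_eq]

lemma uni_eq (i : ι) (a : Fin (m i + 1)) (x : ∀ j, Fin (m j + 1) → ℝ) :
    unilateralPayoff m u i a x
      = ∑ α : ∀ j, Fin (m j + 1), (if α i = a
          then u i α * ∏ j ∈ Finset.univ.erase i, x j (α j) else 0) := by
  unfold unilateralPayoff mixedPayoff
  refine Finset.sum_congr rfl fun α _ => ?_
  rw [prod_update_eval]
  split <;> simp_all

lemma mixed_eq (i : ι) (x : ∀ j, Fin (m j + 1) → ℝ) :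
    mixedPayoff m u i x = ∑ b, x i b * unilateralPayoff m u i b x := by
  have : ∀ b, x i b * unilateralPayoff m u i b x
      = ∑ α : ∀ j, Fin (m j + 1), (if α i = b
          then x i (α i) * (u i α * ∏ j ∈ Finset.univ.erase i, x j (α j)) else 0) := by
    intro b
    rw [uni_eq, Finset.mul_sum]
    refine Finset.sum_congr rfl fun α _ => ?_
    split
    · next h => rw [h]
    · rw [mul_zero]
  rw [Finset.sum_congr rfl fun b _ => this b, Finset.sum_comm]
  unfold mixedPayoff
  refine Finset.sum_congr rfl fun α _ => ?_
  rw [Finset.sum_ite_eq Finset.univ (α i), if_pos (Finset.mem_univ _)]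
  rw [← Finset.mul_prod_erase Finset.univ _ (Finset.mem_univ i)]
  ring

lemma fiber_sum (i : ι) (b c : Fin (m i + 1)) (g : (∀ j, Fin (m j + 1)) → ℝ) :
    ∑ α : ∀ j, Fin (m j + 1), (if α i = c then g (Function.update α i b) else 0)
      = ∑ β : ∀ j, Fin (m j + 1), (if β i = b then g β else 0) := by
  rw [← Finset.sum_filter, ← Finset.sum_filter]
  refine Finset.sum_nbij' (fun α => Function.update α i b)
    (fun β => Function.update β i c) ?_ ?_ ?_ ?_ ?_
  · intro α hα; simp
  · intro β hβ; simp
  · intro α hα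
    simp only [Finset.mem_filter, Finset.mem_univ, true_and] at hα
    show Function.update (Function.update α i b) i c = α
    rw [Function.update_idem, ← hα, Function.update_eq_self]
  · intro β hβ
    simp only [Finset.mem_filter, Finset.mem_univ, true_and] at hβ
    show Function.update (Function.update β i c) i b = β
    rw [Function.update_idem, ← hβ, Function.update_eq_self]
  · intro α hα; rfl

lemma fiber_sum' (i : ι) (b c : Fin (m i + 1)) (x : ∀ j, Fin (m j + 1) → ℝ) :
    ∑ α : ∀ j, Fin (m j + 1), (if α i = c then u i (Function.update α i b) *
        ∏ j ∈ Finset.univ.erase i, x j (Function.update α i b j) else 0)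
      = ∑ β : ∀ j, Fin (m j + 1), (if β i = b then u i β *
        ∏ j ∈ Finset.univ.erase i, x j (β j) else 0) :=
  fiber_sum m i b c (fun β => u i β * ∏ j ∈ Finset.univ.erase i, x j (β j))

lemma uni_shift (i : ι) (b : Fin (m i + 1)) (x : ∀ j, Fin (m j + 1) → ℝ)
    (hx : ∑ c, x i c = 1) :
    ∑ α : ∀ j, Fin (m j + 1), u i (Function.update α i b) * ∏ j, x j (α j)
      = unilateralPayoff m u i b x := by
  have h1 : ∀ α : ∀ j, Fin (m j + 1),
      u i (Function.update α i b) * ∏ j, x j (α j)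
      = ∑ c, (if α i = c then x i c *
          ((u i (Function.update α i b)) * ∏ j ∈ Finset.univ.erase i, x j (α j)) else 0) := by
    intro α
    rw [Finset.sum_ite_eq Finset.univ (α i), if_pos (Finset.mem_univ _),
      ← Finset.mul_prod_erase Finset.univ _ (Finset.mem_univ i)]
    ring
  rw [Finset.sum_congr rfl fun α _ => h1 α, Finset.sum_comm]
  have h2 : ∀ c, ∑ α : ∀ j, Fin (m j + 1), (if α i = c then x i c *
      ((u i (Function.update α i b)) * ∏ j ∈ Finset.univ.erase i, x j (α j)) else 0)
      = x i c * unilateralPayoff m u i b x := by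
    intro c
    have h3 : ∀ α : ∀ j, Fin (m j + 1), (if α i = c then x i c *
        ((u i (Function.update α i b)) * ∏ j ∈ Finset.univ.erase i, x j (α j)) else 0)
        = x i c * (if α i = c then u i (Function.update α i b) *
            ∏ j ∈ Finset.univ.erase i, x j (Function.update α i b j) else 0) := by
      intro α
      rw [mul_ite, mul_zero]
      by_cases hα : α i = c
      · rw [if_pos hα, if_pos hα]
        exact congrArg (fun r => x i c * (u i (Function.update α i b) * r))
          (Finset.prod_congr rfl fun j hj =>
            congrArg (x j) (Function.update_of_ne (Finset.mem_erase.1 hj).1 b α).symm)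
      · rw [if_neg hα, if_neg hα]
    rw [Finset.sum_congr rfl fun α _ => h3 α, ← Finset.mul_sum, fiber_sum', ← uni_eq]
  rw [Finset.sum_congr rfl fun c _ => h2 c, ← Finset.sum_mul, hx, one_mul]


lemma fullCoord_sum_one (y : ∀ j, Fin (m j) → ℝ) (i : ι) :
    ∑ c, fullCoord m y i c = 1 := by
  simp [fullCoord, Fin.sum_cons]

lemma player_term (i : ι) (y : ∀ j, Fin (m j) → ℝ) :
    ∑ k, effField m u i k y - ((m i : ℝ) + 1) * ∑ l, y i l * effField m u i l y
    = ∑ b, unilateralPayoff m u i b (fullCoord m y)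
      - ((m i : ℝ) + 1) * mixedPayoff m u i (fullCoord m y) := by
  simp only [effField]
  rw [mixed_eq]
  simp only [Fin.sum_univ_succ, fullCoord, Fin.cons_zero, Fin.cons_succ]
  rw [Finset.sum_sub_distrib, Finset.sum_const, Finset.card_univ, Fintype.card_fin,
    nsmul_eq_mul]
  simp only [mul_sub]
  rw [Finset.sum_sub_distrib, ← Finset.sum_mul]
  ring

lemma hper (i : ι) (y : ∀ j, Fin (m j) → ℝ) :
    ∑ α : ∀ j, Fin (m j + 1), (∑ b : Fin (m i + 1),
        (u i (Function.update α i b) - u i α)) * ∏ j, fullCoord m y j (α j)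
    = (∑ b, unilateralPayoff m u i b (fullCoord m y))
      - ((m i : ℝ) + 1) * mixedPayoff m u i (fullCoord m y) := by
  simp only [Finset.sum_mul, sub_mul]
  rw [Finset.sum_comm]
  have h1 : ∀ b : Fin (m i + 1),
      ∑ α : ∀ j, Fin (m j + 1), (u i (Function.update α i b) * ∏ j, fullCoord m y j (α j)
        - u i α * ∏ j, fullCoord m y j (α j))
      = unilateralPayoff m u i b (fullCoord m y) - mixedPayoff m u i (fullCoord m y) := by
    intro b
    rw [Finset.sum_sub_distrib, uni_shift m u i b _ (fullCoord_sum_one m y i)]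
    rfl
  rw [Finset.sum_congr rfl fun b _ => h1 b, Finset.sum_sub_distrib, Finset.sum_const,
    Finset.card_univ, Fintype.card_fin, nsmul_eq_mul]
  push_cast
  ring

lemma keyAlg (y : ∀ j, Fin (m j) → ℝ) :
    ∑ i, (1/2) * (∑ k, effField m u i k y
        - ((m i : ℝ) + 1) * ∑ l, y i l * effField m u i l y)
    = (1/2) * ∑ α : ∀ j, Fin (m j + 1),
        (∑ i, ∑ b : Fin (m i + 1), (u i (Function.update α i b) - u i α)) *
          ∏ j, fullCoord m y j (α j) := by
  rw [← Finset.mul_sum]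
  congr 1
  have : ∀ α : ∀ j, Fin (m j + 1),
      (∑ i, ∑ b : Fin (m i + 1), (u i (Function.update α i b) - u i α)) *
        ∏ j, fullCoord m y j (α j)
      = ∑ i, (∑ b : Fin (m i + 1), (u i (Function.update α i b) - u i α)) *
          ∏ j, fullCoord m y j (α j) := fun α => Finset.sum_mul _ _ _
  rw [Finset.sum_congr rfl fun α _ => this α, Finset.sum_comm]
  exact Finset.sum_congr rfl fun i _ => by rw [player_term, hper]

lemma shahDiv_eq (y : ∀ j, Fin (m j) → ℝ)
    (hpos : ∀ i k, 0 < y i k) (hs : ∀ i, ∑ k, y i k < 1) :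
    shahDiv m u y = (1/2) * ∑ α : ∀ j, Fin (m j + 1),
        (∑ i, ∑ b : Fin (m i + 1), (u i (Function.update α i b) - u i α)) *
          ∏ j, fullCoord m y j (α j) := by
  unfold shahDiv
  rw [Finset.sum_congr rfl (fun i _ => inner_sum m u i y (hpos i) (hs i)), keyAlg]


lemma cont_fullCoord (j : ι) (b : Fin (m j + 1)) :
    Continuous (fun y : ∀ j, Fin (m j) → ℝ => fullCoord m y j b) := by
  have hc : ∀ (jj : ι) (k : Fin (m jj)),
      Continuous (fun y : ∀ j, Fin (m j) → ℝ => y jj k) :=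
    fun jj k => (continuous_apply k).comp (continuous_apply jj)
  induction b using Fin.cases with
  | zero =>
    simp only [fullCoord, Fin.cons_zero]
    exact continuous_const.sub (continuous_finset_sum _ fun k _ => hc j k)
  | succ k =>
    simp only [fullCoord, Fin.cons_succ]
    exact hc j k

lemma vertex_fullCoord (α : ∀ j, Fin (m j + 1)) (j : ι) (b : Fin (m j + 1)) :
    fullCoord m (fun j k => if (k.succ : Fin (m j + 1)) = α j then (1:ℝ) else 0) j b
      = if b = α j then 1 else 0 := by
  have hsum : ∑ k : Fin (m j), (if (k.succ : Fin (m j + 1)) = α j then (1:ℝ) else 0)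
      = if (0 : Fin (m j + 1)) = α j then 0 else 1 := by
    rcases Fin.eq_zero_or_eq_succ (α j) with h | ⟨c, h⟩
    · rw [h]
      simp [Fin.succ_ne_zero]
    · rw [h]
      simp [Fin.succ_inj, Fin.succ_ne_zero, (Fin.succ_ne_zero c).symm]
  induction b using Fin.cases with
  | zero =>
    show (1 : ℝ) - ∑ k : Fin (m j), _ = _
    rw [hsum]
    by_cases h0 : (0 : Fin (m j + 1)) = α j <;> simp [h0]
  | succ k =>
    show (if (k.succ : Fin (m j + 1)) = α j then (1:ℝ) else 0) = _
    rfl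

lemma vertex_prod (α β : ∀ j, Fin (m j + 1)) :
    ∏ j, fullCoord m (fun j k => if (k.succ : Fin (m j + 1)) = α j then (1:ℝ) else 0) j (β j)
      = if β = α then 1 else 0 := by
  rw [Finset.prod_congr rfl fun j _ => vertex_fullCoord m α j (β j), Finset.prod_boole]
  by_cases hβ : β = α
  · subst hβ; simp
  · rw [if_neg hβ, if_neg]
    intro hall
    exact hβ (funext fun j => hall j (Finset.mem_univ j))

lemma harmonic_of_incompressible
    (h : ∀ y : ∀ j, Fin (m j) → ℝ,
      (∀ i k, 0 < y i k) → (∀ i, ∑ k, y i k < 1) → shahDiv m u y = 0)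
    (α : ∀ j, Fin (m j + 1)) :
    ∑ i, ∑ b : Fin (m i + 1), (u i (Function.update α i b) - u i α) = 0 := by
  classical
  set F : (∀ j, Fin (m j + 1)) → ℝ :=
    fun β => ∑ i, ∑ b : Fin (m i + 1), (u i (Function.update β i b) - u i β) with hF
  set G : (∀ j, Fin (m j) → ℝ) → ℝ :=
    fun y => ∑ β : ∀ j, Fin (m j + 1), F β * ∏ j, fullCoord m y j (β j) with hG
  have hG0 : ∀ y : ∀ j, Fin (m j) → ℝ,
      (∀ i k, 0 < y i k) → (∀ i, ∑ k, y i k < 1) → G y = 0 := by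
    intro y hp hsy
    have h1 := shahDiv_eq m u y hp hsy
    rw [h y hp hsy] at h1
    have : (0:ℝ) = (1/2) * G y := h1
    linarith
  have contG : Continuous G := by
    apply continuous_finset_sum
    intro β _
    exact continuous_const.mul
      (continuous_finset_prod _ fun j _ => cont_fullCoord m j (β j))
  -- the vertex and the path
  set v : ∀ j, Fin (m j) → ℝ :=
    fun j k => if (k.succ : Fin (m j + 1)) = α j then (1:ℝ) else 0 with hv
  have hGv : G v = F α := by
    simp only [hG, hv]
    rw [Finset.sum_congr rfl fun β _ => by rw [vertex_prod m α β]]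
    simp only [mul_ite, mul_one, mul_zero, Finset.sum_ite_eq' Finset.univ α F,
      Finset.mem_univ, if_true]
  set q : ℝ → ∀ j, Fin (m j) → ℝ :=
    fun t j k => (1 - t) * v j k + t * (1 / ((m j : ℝ) + 2)) with hq
  have hv01 : ∀ j k, (0:ℝ) ≤ v j k := by
    intro j k; simp only [hv]; split <;> norm_num
  have hvsum : ∀ j, ∑ k, v j k ≤ 1 := by
    intro j
    have h0 := vertex_fullCoord m α j 0
    simp only [fullCoord, Fin.cons_zero] at h0
    simp only [hv]
    split at h0 <;> linarith
  have hqpos : ∀ t, 0 < t → t < 1 → ∀ i k, 0 < q t i k := by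
    intro t ht ht1 i k
    simp only [hq]
    have h2 : (0:ℝ) < (m i : ℝ) + 2 := by positivity
    have h4 := hv01 i k
    have h3 : (0:ℝ) < t * (1 / ((m i : ℝ) + 2)) := by positivity
    nlinarith
  have hqsum : ∀ t, 0 < t → t < 1 → ∀ i, ∑ k, q t i k < 1 := by
    intro t ht ht1 i
    have h2 : (0:ℝ) < (m i : ℝ) + 2 := by positivity
    have hsum : ∑ k, q t i k
        = (1 - t) * (∑ k, v i k) + (m i : ℝ) * (t * (1 / ((m i : ℝ) + 2))) := by
      simp only [hq]
      rw [Finset.sum_add_distrib, ← Finset.mul_sum, Finset.sum_const,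
        Finset.card_univ, Fintype.card_fin, nsmul_eq_mul]
    rw [hsum]
    have h4 : (1 - t) * (∑ k, v i k) ≤ (1 - t) * 1 :=
      mul_le_mul_of_nonneg_left (hvsum i) (by linarith)
    have h5 : (m i : ℝ) * (t * (1 / ((m i : ℝ) + 2))) = t * ((m i : ℝ) / ((m i : ℝ) + 2)) := by
      field_simp
    have h6 : (m i : ℝ) / ((m i : ℝ) + 2) < 1 := by
      rw [div_lt_one h2]; linarith
    nlinarith [mul_pos ht (sub_pos.2 h6)]
  have contq : Continuous q := by
    apply continuous_pi; intro j; apply continuous_pi; intro k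
    simp only [hq]
    exact ((continuous_const.sub continuous_id).mul continuous_const).add
      (continuous_id.mul continuous_const)
  have hq0 : q 0 = v := by
    funext j k; simp [hq]
  have h1 : Filter.Tendsto (fun t => G (q t)) (nhdsWithin 0 (Set.Ioi 0)) (nhds (G v)) := by
    have h0 := (contG.comp contq).tendsto 0
    simp only [Function.comp_apply, Function.comp_def, hq0] at h0
    exact h0.mono_left nhdsWithin_le_nhds
  have hev : ∀ᶠ t in nhdsWithin (0:ℝ) (Set.Ioi 0), G (q t) = 0 := by
    filter_upwards [Ioo_mem_nhdsGT zero_lt_one] with t ht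
    exact hG0 (q t) (hqpos t ht.1 ht.2) (hqsum t ht.1 ht.2)
  have h2 : Filter.Tendsto (fun t => G (q t)) (nhdsWithin 0 (Set.Ioi 0)) (nhds 0) :=
    Filter.Tendsto.congr' (Filter.EventuallyEq.symm hev) tendsto_const_nhds
  have : G v = 0 := tendsto_nhds_unique h1 h2
  rw [hGv] at this
  exact this

end HIC

end

/-- **A finite game is harmonic iff it is incompressible**: the harmonicity condition
`∑_i ∑_{β_i} (u_i(β_i;α_{-i}) − u_i(α_i;α_{-i})) = 0` holds at every pure profile `α`
iff the Shahshahani divergence of the effective replicator field vanishes identically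
on the interior of the strategy space. -/
theorem harmonic_iff_incompressible
    {ι : Type*} [Fintype ι] [DecidableEq ι] (m : ι → ℕ)
    (u : ι → (∀ j, Fin (m j + 1)) → ℝ) :
    (∀ α : ∀ j, Fin (m j + 1),
        ∑ i, ∑ b : Fin (m i + 1), (u i (Function.update α i b) - u i α) = 0)
    ↔ (∀ y : ∀ j, Fin (m j) → ℝ,
        (∀ i k, 0 < y i k) → (∀ i, ∑ k, y i k < 1) → shahDiv m u y = 0) := by
  constructor
  · intro hharm y hpos hs
    rw [HIC.shahDiv_eq m u y hpos hs]
    rw [Finset.sum_congr rfl fun α _ => by rw [hharm α, zero_mul]]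
    simp
  · intro h α
    exact HIC.harmonic_of_incompressible m u h α

end
end
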